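/- Let ξ(s) = Σ a_i s_i and ξ'(s) = Σ a_i' s_i be linear forms in ℓ variables with all a_i, a_i' nonzero integers such that a_i' divides a_i and a_i/a_i' divides Q for every i, for some positive integer Q. If (f, f̃) is an ε-discrepancy pair with width S with respect to ξ, then (f, f̃) is an ε-discrepancy pair with width QS with respect to ξ'. -/

import Mathlib

/-- The box [S]^ℓ ⊆ ℤ^ℓ. -/
noncomputable def sbox (ℓ S : ℕ) : Finset (Fin ℓ → ℤ) :=
  Fintype.piFinset fun _ => Finset.Icc (1 : ℤ) (S : ℤ)

/-- (f, f̃) is an ε-discrepancy pair with width S with respect to the linear form ξ: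
for all u₁,…,u_ℓ : G^{ℓ+1} → [−1,1] with uᵢ not depending on sᵢ,
|E_{n∈G} E_{s∈[S]^ℓ} (f(n+ξ(s)) − f̃(n+ξ(s))) ∏ᵢ uᵢ(n,s)| ≤ ε. -/
def IsDiscrepancyPair (N : ℕ) [NeZero N] (ℓ S : ℕ) (ε : ℝ)
    (ξ : (Fin ℓ → ℤ) → ℤ) (f ftil : ZMod N → ℝ) : Prop :=
  ∀ u : Fin ℓ → ZMod N → (Fin ℓ → ZMod N) → ℝ,
    (∀ i n s, |u i n s| ≤ 1) →
    (∀ i n s s', (∀ j, j ≠ i → s j = s' j) → u i n s = u i n s') →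
    |(∑ n : ZMod N, ∑ s ∈ sbox ℓ S,
        (f (n + ((ξ s : ℤ) : ZMod N)) - ftil (n + ((ξ s : ℤ) : ZMod N))) *
          ∏ i, u i n fun j => ((s j : ℤ) : ZMod N)) / ((N : ℝ) * (S : ℝ) ^ ℓ)| ≤ ε

open Finset

def rho (q S : ℤ) (w : ℤ × ℤ) : ℤ := w.1 + |q| * S * w.2 + (1 - min q (q * S))

lemma qs_bounds (q S : ℤ) (hq : q ≠ 0) (hS : 1 ≤ S) :
    ∀ s : ℤ, 1 ≤ s → s ≤ S → 0 ≤ q * s - min q (q * S) ∧ q * s - min q (q * S) ≤ |q| * (S - 1) := by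
  intro s h1 h2
  rcases hq.lt_or_gt with hlt | hlt
  · rw [min_eq_right (by nlinarith), abs_of_neg hlt]
    constructor <;> nlinarith
  · rw [min_eq_left (by nlinarith), abs_of_pos hlt]
    constructor <;> nlinarith

lemma qs_eq (q S : ℤ) (hq : q ≠ 0) (hS : 1 ≤ S) (u : ℤ) :
    q * (if 0 < q then u + 1 else S - u) = |q| * u + min q (q * S) := by
  rcases hq.lt_or_gt with hlt | hlt
  · rw [if_neg (not_lt.mpr hlt.le), min_eq_right (by nlinarith), abs_of_neg hlt]
    ring
  · rw [if_pos hlt, min_eq_left (by nlinarith), abs_of_pos hlt]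
    ring

lemma coord_bij (q S Q' : ℤ) (hq : q ≠ 0) (hS : 1 ≤ S) (hQ' : 1 ≤ Q') :
    Set.BijOn (fun p : ℤ × ℤ × ℤ => q * p.1 + rho q S p.2)
      ↑(Icc (1:ℤ) S ×ˢ (Icc (0:ℤ) (|q|-1) ×ˢ Icc (0:ℤ) (Q'-1)))
      ↑(Icc (1:ℤ) (|q| * Q' * S)) := by
  have hb : 0 < |q| := abs_pos.mpr hq
  have hbq : |q| ∣ q := (abs_dvd q q).mpr dvd_rfl
  refine ⟨?_, ?_, ?_⟩
  · rintro ⟨s, j, k⟩ hp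
    simp only [coe_product, Set.mem_prod, mem_coe, mem_Icc, rho] at hp ⊢
    obtain ⟨⟨hs1, hs2⟩, ⟨hj1, hj2⟩, hk1, hk2⟩ := hp
    obtain ⟨hA, hB⟩ := qs_bounds q S hq hS s hs1 hs2
    have h1 : 0 ≤ |q| * S * k := by positivity
    have h2 : |q| * S * k ≤ |q| * S * Q' - |q| * S := by
      have := mul_le_mul_of_nonneg_left (by omega : k ≤ Q' - 1) (by positivity : (0:ℤ) ≤ |q| * S)
      nlinarith
    constructor <;> nlinarith
  · rintro ⟨s, j, k⟩ hp ⟨s', j', k'⟩ hp' heq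
    simp only [coe_product, Set.mem_prod, mem_coe, mem_Icc] at hp hp'
    obtain ⟨⟨hs1, hs2⟩, ⟨hj1, hj2⟩, hk1, hk2⟩ := hp
    obtain ⟨⟨hs1', hs2'⟩, ⟨hj1', hj2'⟩, hk1', hk2'⟩ := hp'
    simp only [rho] at heq
    have hj : j = j' := by
      have hdv : |q| ∣ (j - j') := by
        have h3 : j - j' = q * (s' - s) + |q| * S * (k' - k) := by linarith [heq]
        rw [h3]
        exact dvd_add (hbq.mul_right _) ((dvd_mul_right |q| S).mul_right _)
      have := Int.eq_zero_of_abs_lt_dvd hdv (by rw [abs_lt]; omega)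
      omega
    subst hj
    have heq2 : q * (s - s') = |q| * S * (k' - k) := by linarith [heq]
    have hss : s = s' := by
      have hdv : |q| * S ∣ q * (s - s') := by rw [heq2]; exact Dvd.intro _ rfl
      have habs : |q * (s - s')| < |q| * S := by
        rw [abs_mul]
        calc |q| * |s - s'| ≤ |q| * (S - 1) := by
              apply mul_le_mul_of_nonneg_left _ hb.le
              rw [abs_le]; omega
          _ < |q| * S := by nlinarith
      have h0 := Int.eq_zero_of_abs_lt_dvd hdv habs
      rcases mul_eq_zero.mp h0 with h | h
      · exact absurd h hq
      · omega
    subst hss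
    have : k = k' := by
      have h0 : |q| * S * (k' - k) = 0 := by rw [← heq2]; ring
      rcases mul_eq_zero.mp h0 with h | h
      · exfalso; rcases mul_eq_zero.mp h with h | h <;> omega
      · omega
    simp [this]
  · intro t ht
    simp only [mem_coe, mem_Icc] at ht
    obtain ⟨ht1, ht2⟩ := ht
    have hbS : 0 < |q| * S := by positivity
    set M := t - 1 with hM
    set k := M / (|q| * S) with hk
    set m := M % (|q| * S) with hm
    set u := m / |q| with hu
    set j := m % |q| with hj
    set s : ℤ := if 0 < q then u + 1 else S - u with hs
    have hM0 : 0 ≤ M := by omega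
    have hk0 : 0 ≤ k := Int.ediv_nonneg hM0 hbS.le
    have hk1 : k < Q' := by
      rw [hk, Int.ediv_lt_iff_lt_mul hbS]
      nlinarith
    have hm0 : 0 ≤ m := Int.emod_nonneg M hbS.ne'
    have hm1 : m < |q| * S := Int.emod_lt_of_pos M hbS
    have hu0 : 0 ≤ u := Int.ediv_nonneg hm0 hb.le
    have hu1 : u < S := by
      rw [hu, Int.ediv_lt_iff_lt_mul hb]
      nlinarith
    have hj0 : 0 ≤ j := Int.emod_nonneg m hb.ne'
    have hj1 : j < |q| := Int.emod_lt_of_pos m hb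
    have hMk : |q| * S * k + m = M := Int.mul_ediv_add_emod M (|q| * S)
    have hmu : |q| * u + j = m := Int.mul_ediv_add_emod m |q|
    have hqs : q * s = |q| * u + min q (q * S) := qs_eq q S hq hS u
    have hsb : 1 ≤ s ∧ s ≤ S := by rw [hs]; split <;> omega
    refine ⟨⟨s, j, k⟩, ?_, ?_⟩
    · simp only [coe_product, Set.mem_prod, mem_coe, mem_Icc]
      exact ⟨⟨hsb.1, hsb.2⟩, ⟨hj0, by omega⟩, hk0, by omega⟩
    · simp only [rho]
      rw [hqs]; linarith

noncomputable def wbox (ℓ Q : ℕ) (q : Fin ℓ → ℤ) : Finset (Fin ℓ → ℤ × ℤ) :=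
  Fintype.piFinset fun i => Icc (0:ℤ) (|q i| - 1) ×ˢ Icc (0:ℤ) ((Q:ℤ) / |q i| - 1)

lemma wbox_card (ℓ Q : ℕ) (q : Fin ℓ → ℤ) (hq0 : ∀ i, q i ≠ 0)
    (hQdvd : ∀ i, q i ∣ (Q:ℤ)) : (wbox ℓ Q q).card = Q ^ ℓ := by
  rw [wbox, Fintype.card_piFinset]
  have hc : ∀ i : Fin ℓ, ((Icc (0:ℤ) (|q i| - 1) ×ˢ Icc (0:ℤ) ((Q:ℤ) / |q i| - 1)).card) = Q := by
    intro i
    have hb : 0 < |q i| := abs_pos.mpr (hq0 i)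
    have hbQ : |q i| * ((Q:ℤ) / |q i|) = Q := Int.mul_ediv_cancel' ((abs_dvd _ _).mpr (hQdvd i))
    have hQ'0 : 0 ≤ (Q:ℤ) / |q i| := Int.ediv_nonneg (by positivity) hb.le
    rw [card_product, Int.card_Icc, Int.card_Icc]
    have e1 : (|q i| - 1 + 1 - 0 : ℤ) = |q i| := by ring
    have e2 : ((Q:ℤ)/|q i| - 1 + 1 - 0 : ℤ) = (Q:ℤ)/|q i| := by ring
    rw [e1, e2]
    have : ((|q i|.toNat * ((Q:ℤ)/|q i|).toNat : ℕ) : ℤ) = (Q:ℤ) := by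
      push_cast [Int.toNat_of_nonneg hb.le, Int.toNat_of_nonneg hQ'0]
      exact hbQ
    exact_mod_cast this
  simp only [hc]
  rw [Finset.prod_const, Finset.card_univ, Fintype.card_fin]

lemma sum_box_decomp {M : Type*} [AddCommMonoid M] (ℓ S Q : ℕ) (hS : 1 ≤ S) (hQ : 0 < Q)
    (q : Fin ℓ → ℤ) (hq0 : ∀ i, q i ≠ 0) (hQdvd : ∀ i, q i ∣ (Q:ℤ)) (F : (Fin ℓ → ℤ) → M) :
    ∑ t ∈ sbox ℓ (Q * S), F t
      = ∑ w ∈ wbox ℓ Q q, ∑ s ∈ sbox ℓ S, F (fun i => q i * s i + rho (q i) S (w i)) := by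
  have hS1 : (1:ℤ) ≤ (S:ℤ) := by exact_mod_cast hS
  have hb : ∀ i, 0 < |q i| := fun i => abs_pos.mpr (hq0 i)
  have hbQ : ∀ i, |q i| * ((Q:ℤ) / |q i|) = (Q:ℤ) :=
    fun i => Int.mul_ediv_cancel' ((abs_dvd _ _).mpr (hQdvd i))
  have hQ'1 : ∀ i, 1 ≤ (Q:ℤ) / |q i| := by
    intro i
    have h0 : 0 ≤ (Q:ℤ) / |q i| := Int.ediv_nonneg (by positivity) (hb i).le
    rcases h0.lt_or_eq with hlt | heq
    · omega
    · exfalso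
      have h1 := hbQ i
      rw [← heq, mul_zero] at h1
      have h2 : (0:ℤ) < (Q:ℤ) := by exact_mod_cast hQ
      omega
  have hIcc : ∀ i, |q i| * ((Q:ℤ)/|q i|) * (S:ℤ) = ((Q*S : ℕ) : ℤ) := by
    intro i; rw [hbQ i]; push_cast; ring
  have hcb : ∀ i, Set.BijOn (fun p : ℤ × ℤ × ℤ => q i * p.1 + rho (q i) S p.2)
      ↑(Icc (1:ℤ) S ×ˢ (Icc (0:ℤ) (|q i|-1) ×ˢ Icc (0:ℤ) ((Q:ℤ)/|q i|-1)))
      ↑(Icc (1:ℤ) (|q i| * ((Q:ℤ)/|q i|) * S)) :=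
    fun i => coord_bij (q i) S ((Q:ℤ)/|q i|) (hq0 i) hS1 (hQ'1 i)
  calc ∑ t ∈ sbox ℓ (Q*S), F t
      = ∑ p ∈ (wbox ℓ Q q) ×ˢ sbox ℓ S, F (fun i => q i * p.2 i + rho (q i) (S:ℤ) (p.1 i)) := by
        refine (Finset.sum_nbij (fun p (i : Fin ℓ) => q i * p.2 i + rho (q i) (S:ℤ) (p.1 i))
          ?_ ?_ ?_ ?_).symm
        · intro p hp
          rw [Finset.mem_product] at hp
          rw [sbox, Fintype.mem_piFinset]
          intro i
          have h2 : p.2 i ∈ Icc (1:ℤ) (S:ℤ) := by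
            have := hp.2; rw [sbox, Fintype.mem_piFinset] at this; exact this i
          have h1 : p.1 i ∈ Icc (0:ℤ) (|q i| - 1) ×ˢ Icc (0:ℤ) ((Q:ℤ)/|q i| - 1) := by
            have := hp.1; rw [wbox, Fintype.mem_piFinset] at this; exact this i
          have hmem : ((p.2 i, p.1 i) : ℤ × ℤ × ℤ)
              ∈ ↑(Icc (1:ℤ) S ×ˢ (Icc (0:ℤ) (|q i|-1) ×ˢ Icc (0:ℤ) ((Q:ℤ)/|q i|-1))) := by
            rw [Finset.mem_product]; exact ⟨h2, h1⟩
          have hres := (hcb i).mapsTo hmem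
          rw [Finset.mem_coe, hIcc i] at hres
          exact hres
        · intro p hp p' hp' heq
          rw [Finset.mem_coe, Finset.mem_product] at hp hp'
          have hcomp : ∀ i, ((p.2 i, p.1 i) : ℤ × ℤ × ℤ) = (p'.2 i, p'.1 i) := by
            intro i
            apply (hcb i).injOn
            · rw [Finset.mem_coe, Finset.mem_product]
              constructor
              · have := hp.2; rw [sbox, Fintype.mem_piFinset] at this; exact this i
              · have := hp.1; rw [wbox, Fintype.mem_piFinset] at this; exact this i
            · rw [Finset.mem_coe, Finset.mem_product]
              constructor
              · have := hp'.2; rw [sbox, Fintype.mem_piFinset] at this; exact this i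
              · have := hp'.1; rw [wbox, Fintype.mem_piFinset] at this; exact this i
            · exact congrFun heq i
          have h1 : p.1 = p'.1 := funext fun i => congrArg Prod.snd (hcomp i)
          have h2 : p.2 = p'.2 := funext fun i => congrArg Prod.fst (hcomp i)
          exact Prod.ext h1 h2
        · intro t ht
          rw [Finset.mem_coe, sbox, Fintype.mem_piFinset] at ht
          have hex : ∀ i, ∃ x ∈ (↑(Icc (1:ℤ) S ×ˢ (Icc (0:ℤ) (|q i|-1) ×ˢ Icc (0:ℤ) ((Q:ℤ)/|q i|-1)))
              : Set (ℤ × ℤ × ℤ)), q i * x.1 + rho (q i) S x.2 = t i := by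
            intro i
            have hti : t i ∈ ↑(Icc (1:ℤ) (|q i| * ((Q:ℤ)/|q i|) * S)) := by
              rw [hIcc i]
              exact ht i
            obtain ⟨x, hx1, hx2⟩ := (hcb i).surjOn hti
            exact ⟨x, hx1, hx2⟩
          choose x hx1 hx2 using hex
          refine ⟨(fun i => (x i).2, fun i => (x i).1), ?_, ?_⟩
          · rw [Finset.mem_coe, Finset.mem_product]
            constructor
            · rw [wbox, Fintype.mem_piFinset]
              intro i
              have := hx1 i; rw [Finset.mem_coe, Finset.mem_product] at this; exact this.2
            · rw [sbox, Fintype.mem_piFinset]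
              intro i
              have := hx1 i; rw [Finset.mem_coe, Finset.mem_product] at this; exact this.1
          · funext i; exact hx2 i
        · intro p hp; rfl
    _ = ∑ w ∈ wbox ℓ Q q, ∑ s ∈ sbox ℓ S, F (fun i => q i * s i + rho (q i) S (w i)) :=
        Finset.sum_product _ _ _

theorem stmt14 (N : ℕ) [NeZero N] (ℓ S Q : ℕ) (hS : 2 ≤ S) (hQ : 0 < Q)
    (ε : ℝ) (hε : 0 < ε) (a a' : Fin ℓ → ℤ)
    (ha : ∀ i, a i ≠ 0) (ha' : ∀ i, a' i ≠ 0)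
    (hdvd : ∀ i, a' i ∣ a i) (hQdvd : ∀ i, a i / a' i ∣ (Q : ℤ))
    (f ftil : ZMod N → ℝ)
    (h : IsDiscrepancyPair N ℓ S ε (fun s => ∑ i, a i * s i) f ftil) :
    IsDiscrepancyPair N ℓ (Q * S) ε (fun s => ∑ i, a' i * s i) f ftil := by
  intro u hu1 hu2
  set q : Fin ℓ → ℤ := fun i => a i / a' i with hqdef
  have hqa : ∀ i, a' i * q i = a i := fun i => Int.mul_ediv_cancel' (hdvd i)
  have hq0 : ∀ i, q i ≠ 0 := by
    intro i hcon
    apply ha i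
    rw [← hqa i, hcon, mul_zero]
  have hNpos : 0 < (N:ℝ) := by
    exact_mod_cast Nat.pos_of_ne_zero (NeZero.ne N)
  have hSpos : 0 < (S:ℝ) := by
    have : 0 < S := by omega
    exact_mod_cast this
  have hden : (0:ℝ) < (N:ℝ) * (S:ℝ) ^ ℓ := by positivity
  -- the per-w bound
  have key : ∀ w : Fin ℓ → ℤ × ℤ,
      |∑ s ∈ sbox ℓ S, ∑ n : ZMod N,
        (f (n + ((∑ i, a' i * (q i * s i + rho (q i) (S:ℤ) (w i)) : ℤ) : ZMod N))
          - ftil (n + ((∑ i, a' i * (q i * s i + rho (q i) (S:ℤ) (w i)) : ℤ) : ZMod N)))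
          * ∏ i, u i n fun j => (((q j * s j + rho (q j) (S:ℤ) (w j) : ℤ)) : ZMod N)|
        ≤ ε * ((N:ℝ) * (S:ℝ) ^ ℓ) := by
    intro w
    set r : ℤ := ∑ i, a' i * rho (q i) (S:ℤ) (w i) with hrdef
    have happ := h (fun i n σ => u i (n - (r : ZMod N))
        (fun j => ((q j : ℤ) : ZMod N) * σ j + ((rho (q j) (S:ℤ) (w j) : ℤ) : ZMod N)))
      (fun i n σ => hu1 _ _ _)
      (fun i n σ σ' hσ => hu2 i _ _ _ (fun j hj => by rw [hσ j hj]))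
    simp only [] at happ
    rw [abs_div, abs_of_pos hden, div_le_iff₀ hden] at happ
    have hXeq : (∑ n : ZMod N, ∑ s ∈ sbox ℓ S,
        (f (n + ((∑ i, a i * s i : ℤ) : ZMod N)) - ftil (n + ((∑ i, a i * s i : ℤ) : ZMod N)))
          * ∏ i, u i (n - (r : ZMod N))
              fun j => ((q j : ℤ) : ZMod N) * ((s j : ℤ) : ZMod N)
                + ((rho (q j) (S:ℤ) (w j) : ℤ) : ZMod N))
        = ∑ s ∈ sbox ℓ S, ∑ n : ZMod N,
        (f (n + ((∑ i, a' i * (q i * s i + rho (q i) (S:ℤ) (w i)) : ℤ) : ZMod N))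
          - ftil (n + ((∑ i, a' i * (q i * s i + rho (q i) (S:ℤ) (w i)) : ℤ) : ZMod N)))
          * ∏ i, u i n fun j => (((q j * s j + rho (q j) (S:ℤ) (w j) : ℤ)) : ZMod N) := by
      rw [Finset.sum_comm]
      refine Finset.sum_congr rfl fun s hs => ?_
      have hlin : (∑ i, a' i * (q i * s i + rho (q i) (S:ℤ) (w i))) = (∑ i, a i * s i) + r := by
        rw [hrdef, ← Finset.sum_add_distrib]
        refine Finset.sum_congr rfl fun i _ => ?_
        rw [← hqa i]; ring
      refine (Fintype.sum_equiv (Equiv.addRight ((r : ℤ) : ZMod N)) _ _ fun n => ?_).symm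
      simp only [Equiv.coe_addRight, add_sub_cancel_right]
      rw [hlin]
      push_cast
      have harg : n + ((∑ x : Fin ℓ, ((a x : ℤ) : ZMod N) * ((s x : ℤ) : ZMod N)) + (r : ZMod N))
          = n + (r : ZMod N) + (∑ x : Fin ℓ, ((a x : ℤ) : ZMod N) * ((s x : ℤ) : ZMod N)) := by ring
      rw [harg]
    rw [hXeq] at happ
    exact happ
  -- main computation
  have hnum : (∑ n : ZMod N, ∑ s ∈ sbox ℓ (Q * S),
      (f (n + ((∑ i, a' i * s i : ℤ) : ZMod N)) - ftil (n + ((∑ i, a' i * s i : ℤ) : ZMod N)))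
        * ∏ i, u i n fun j => ((s j : ℤ) : ZMod N))
      = ∑ w ∈ wbox ℓ Q q, ∑ s ∈ sbox ℓ S, ∑ n : ZMod N,
      (f (n + ((∑ i, a' i * (q i * s i + rho (q i) (S:ℤ) (w i)) : ℤ) : ZMod N))
        - ftil (n + ((∑ i, a' i * (q i * s i + rho (q i) (S:ℤ) (w i)) : ℤ) : ZMod N)))
        * ∏ i, u i n fun j => (((q j * s j + rho (q j) (S:ℤ) (w j) : ℤ)) : ZMod N) := by
    rw [Finset.sum_comm]
    exact sum_box_decomp ℓ S Q (by omega) hQ q hq0 hQdvd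
      (fun t => ∑ n : ZMod N,
        (f (n + ((∑ i, a' i * t i : ℤ) : ZMod N)) - ftil (n + ((∑ i, a' i * t i : ℤ) : ZMod N)))
          * ∏ i, u i n fun j => ((t j : ℤ) : ZMod N))
  simp only [] 
  rw [hnum]
  have hden2 : (0:ℝ) < (N:ℝ) * ((Q * S : ℕ):ℝ) ^ ℓ := by
    have : (0:ℝ) < ((Q * S : ℕ):ℝ) := by
      have : 0 < Q * S := by positivity
      exact_mod_cast this
    positivity
  rw [abs_div, abs_of_pos hden2, div_le_iff₀ hden2]
  calc |∑ w ∈ wbox ℓ Q q, ∑ s ∈ sbox ℓ S, ∑ n : ZMod N, _|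
      ≤ ∑ w ∈ wbox ℓ Q q, |∑ s ∈ sbox ℓ S, ∑ n : ZMod N,
        (f (n + ((∑ i, a' i * (q i * s i + rho (q i) (S:ℤ) (w i)) : ℤ) : ZMod N))
          - ftil (n + ((∑ i, a' i * (q i * s i + rho (q i) (S:ℤ) (w i)) : ℤ) : ZMod N)))
          * ∏ i, u i n fun j => (((q j * s j + rho (q j) (S:ℤ) (w j) : ℤ)) : ZMod N)| :=
        Finset.abs_sum_le_sum_abs _ _
    _ ≤ ∑ w ∈ wbox ℓ Q q, ε * ((N:ℝ) * (S:ℝ) ^ ℓ) :=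
        Finset.sum_le_sum fun w _ => key w
    _ = (Q ^ ℓ : ℕ) * (ε * ((N:ℝ) * (S:ℝ) ^ ℓ)) := by
        rw [Finset.sum_const, wbox_card ℓ Q q hq0 hQdvd, nsmul_eq_mul]
    _ = ε * ((N:ℝ) * ((Q * S : ℕ):ℝ) ^ ℓ) := by
        push_cast
        ring
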